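/- Let d ≥ 1 and fix an integer L ≥ 1, setting L_N = 6^N·L. Let μ be any probability measure on {0,1}^{ℤ^d} (with the product σ-algebra). If for every N ∈ ℕ one has μ({ξ : B(L_N − 1) ↔ξ B(2L_N)^c}) < 2^{−2^N}, then μ(Perc) = 0. -/

import Mathlib

open MeasureTheory

/-!
STATEMENT 9: Let `d ≥ 1`, `L ≥ 1`, `L_N = 6^N·L`, and let `μ` be a probability measure
on `{0,1}^(ℤ^d)` (product σ-algebra). If for every `N` one has
`μ(B(L_N − 1) ↔ξ B(2·L_N)^c) < 2^(−2^N)`, then `μ(Perc) = 0`.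

Configurations are modelled as `(Fin d → ℤ) → Bool` (`true` = open). `Perc` is the
event that there is an infinite (injective) nearest-neighbor path of open sites.
-/

/-- The `ℓ∞` norm of a point of `ℤ^d`, as a natural number. -/
def normInf {d : ℕ} (x : Fin d → ℤ) : ℕ := Finset.univ.sup fun i => (x i).natAbs

/-- The `ℓ¹` norm of a point of `ℤ^d`, as a natural number. -/
def norm1 {d : ℕ} (x : Fin d → ℤ) : ℕ := ∑ i, (x i).natAbs

/-- The `ℓ∞`-ball `B(x, r)` in `ℤ^d`. -/
def box {d : ℕ} (x : Fin d → ℤ) (r : ℕ) : Set (Fin d → ℤ) := {y | normInf (y - x) ≤ r}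

/-- The event `A ↔ξ B`: there is a nearest-neighbor path `γ(0), …, γ(n)` (consecutive
points at `ℓ¹`-distance 1) of open sites (`ξ = true`), with `γ(0)` a nearest neighbor
of a point of `A` and `γ(n)` a nearest neighbor of a point of `B`. -/
def connEvent (d : ℕ) (A B : Set (Fin d → ℤ)) : Set ((Fin d → ℤ) → Bool) :=
  {ξ | ∃ (n : ℕ) (γ : ℕ → (Fin d → ℤ)),
    (∀ i < n, norm1 (γ (i + 1) - γ i) = 1) ∧
    (∀ i ≤ n, ξ (γ i) = true) ∧
    (∃ a ∈ A, norm1 (γ 0 - a) = 1) ∧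
    (∃ b ∈ B, norm1 (γ n - b) = 1)}

/-- `Perc`: the set of configurations containing an infinite nearest-neighbor path
(with pairwise distinct vertices) of open sites. -/
def Perc (d : ℕ) : Set ((Fin d → ℤ) → Bool) :=
  {ξ | ∃ γ : ℕ → (Fin d → ℤ), Function.Injective γ ∧
    (∀ i, norm1 (γ (i + 1) - γ i) = 1) ∧ ∀ i, ξ (γ i) = true}



lemma le_normInf {d : ℕ} (x : Fin d → ℤ) (i : Fin d) : (x i).natAbs ≤ normInf x :=
  Finset.le_sup (f := fun i => (x i).natAbs) (Finset.mem_univ i)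

lemma normInf_le {d : ℕ} (x : Fin d → ℤ) (r : ℕ) (h : ∀ i, (x i).natAbs ≤ r) :
    normInf x ≤ r := Finset.sup_le fun i _ => h i

lemma finite_ball {d : ℕ} (R : ℕ) : {y : Fin d → ℤ | normInf y ≤ R}.Finite := by
  apply Set.Finite.subset (Set.Finite.pi (fun _ : Fin d => Set.finite_Icc (-(R:ℤ)) R))
  intro y hy
  simp only [Set.mem_pi, Set.mem_univ, Set.mem_Icc, forall_true_left]
  intro i
  have := (le_normInf y i).trans hy
  omega

lemma exists_escape {d : ℕ} (γ : ℕ → Fin d → ℤ) (hγ : Function.Injective γ) (R : ℕ) :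
    ∃ n, R < normInf (γ n) := by
  by_contra hcon
  push_neg at hcon
  have hsub : Set.range γ ⊆ {y | normInf y ≤ R} := by rintro _ ⟨n, rfl⟩; exact hcon n
  exact (Set.infinite_range_of_injective hγ) ((finite_ball R).subset hsub)

lemma neighbor_aux {d : ℕ} (x : Fin d → ℤ) (j : Fin d) (s : ℤ) (hs1 : s.natAbs = 1)
    (hs2 : (x j + s).natAbs ≤ max (x j).natAbs 1)
    (hs3 : (x j).natAbs ≤ (x j + s).natAbs + 1) :
    ∃ a : Fin d → ℤ, norm1 (x - a) = 1 ∧ normInf a ≤ max (normInf x) 1 ∧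
      normInf x ≤ normInf a + 1 := by
  set a : Fin d → ℤ := Function.update x j (x j + s) with ha
  have haj : a j = x j + s := Function.update_self _ _ _
  have hai : ∀ i, i ≠ j → a i = x i := fun i hij => Function.update_of_ne hij _ _
  refine ⟨a, ?_, ?_, ?_⟩
  · have hxa : ∀ i, ((x - a) i).natAbs = if i = j then 1 else 0 := by
      intro i
      by_cases hij : i = j
      · rw [if_pos hij, hij, Pi.sub_apply, haj]
        omega
      · rw [if_neg hij, Pi.sub_apply, hai i hij]
        omega
    unfold norm1
    rw [Finset.sum_congr rfl (fun i _ => hxa i)]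
    simp
  · apply normInf_le
    intro i
    by_cases hij : i = j
    · rw [hij, haj]
      exact hs2.trans (max_le_max (le_normInf x j) le_rfl)
    · rw [hai i hij]
      exact le_trans (le_normInf x i) (le_max_left _ _)
  · apply normInf_le
    intro i
    by_cases hij : i = j
    · have h2 := le_normInf a j
      rw [haj] at h2
      rw [hij]
      omega
    · have h2 := le_normInf a i
      rw [hai i hij] at h2
      omega

lemma neighbor {d : ℕ} (hd : 1 ≤ d) (x : Fin d → ℤ) :
    ∃ a : Fin d → ℤ, norm1 (x - a) = 1 ∧ normInf a ≤ max (normInf x) 1 ∧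
      normInf x ≤ normInf a + 1 := by
  set j : Fin d := ⟨0, hd⟩
  rcases lt_or_ge (x j) 0 with hneg | hpos
  · exact neighbor_aux x j 1 (by simp) (by omega) (by omega)
  · exact neighbor_aux x j (-1) (by simp) (by omega) (by omega)

theorem no_percolation_of_crossing_decay (d L : ℕ) (hd : 1 ≤ d) (hL : 1 ≤ L)
    (μ : Measure ((Fin d → ℤ) → Bool)) (hμ : IsProbabilityMeasure μ)
    (h : ∀ N : ℕ,
      μ (connEvent d (box (0 : Fin d → ℤ) (6 ^ N * L - 1))
          (box (0 : Fin d → ℤ) (2 * (6 ^ N * L)))ᶜ) < (2 : ENNReal)⁻¹ ^ 2 ^ N) :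
    μ (Perc d) = 0 := by
  set E : ℕ → Set ((Fin d → ℤ) → Bool) := fun N =>
    connEvent d (box (0 : Fin d → ℤ) (6 ^ N * L - 1))
      (box (0 : Fin d → ℤ) (2 * (6 ^ N * L)))ᶜ with hE
  have hsub : Perc d ⊆ ⋃ M : ℕ, ⋂ N, ⋂ (_ : M ≤ N), E N := by
    rintro ξ ⟨γ, hinj, hstep, hopen⟩
    refine Set.mem_iUnion.2 ⟨normInf (γ 0) + 2, ?_⟩
    simp only [Set.mem_iInter]
    intro N hN
    have hLN : normInf (γ 0) + 3 ≤ 6 ^ N * L := by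
      have h6 : N < 6 ^ N := Nat.lt_pow_self (by norm_num)
      have : 6 ^ N ≤ 6 ^ N * L := Nat.le_mul_of_pos_right _ hL
      omega
    obtain ⟨a, ha1, ha2, _⟩ := neighbor hd (γ 0)
    obtain ⟨n, hn⟩ := exists_escape γ hinj (2 * (6 ^ N * L) + 1)
    obtain ⟨b, hb1, _, hb3⟩ := neighbor hd (γ n)
    refine ⟨n, γ, fun i _ => hstep i, fun i _ => hopen i, ⟨a, ?_, ha1⟩, ⟨b, ?_, hb1⟩⟩
    · show normInf (a - 0) ≤ 6 ^ N * L - 1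
      rw [sub_zero]
      have hmax : max (normInf (γ 0)) 1 ≤ 6 ^ N * L - 1 := by
        rw [max_le_iff]; omega
      exact ha2.trans hmax
    · simp only [Set.mem_compl_iff, box, Set.mem_setOf_eq, sub_zero, not_le]
      omega
  have hnull : ∀ M : ℕ, μ (⋂ N, ⋂ (_ : M ≤ N), E N) = 0 := by
    intro M
    have hle : ∀ N, M ≤ N → μ (⋂ N, ⋂ (_ : M ≤ N), E N) ≤ (2 : ENNReal)⁻¹ ^ 2 ^ N :=
      fun N hN => le_trans (measure_mono (Set.iInter₂_subset N hN)) (h N).le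
    have htend : Filter.Tendsto (fun N : ℕ => (2 : ENNReal)⁻¹ ^ 2 ^ N)
        Filter.atTop (nhds 0) := by
      have h1 : Filter.Tendsto (fun n : ℕ => (2 : ENNReal)⁻¹ ^ n) Filter.atTop (nhds 0) :=
        ENNReal.tendsto_pow_atTop_nhds_zero_of_lt_one (by norm_num)
      exact h1.comp (tendsto_pow_atTop_atTop_of_one_lt one_lt_two)
    have hle0 := ge_of_tendsto htend (Filter.eventually_atTop.2 ⟨M, hle⟩)
    exact le_antisymm hle0 (zero_le)
  exact le_antisymm ((measure_mono hsub).trans (le_of_eq (measure_iUnion_null hnull)))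
    (zero_le)
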